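/- Let R ∈ ℝ^{n×n} satisfy R·1 = 1, diag(R) = 0, have 1 as a simple eigenvalue with strictly positive normalized left eigenvector r > 0, r^T 1 = 1. For x in the simplex Δ_n with x not a vertex, define W(x) := diag(x) + (I − diag(x))R. Then any row vector α with α^T W(x) = α^T and α^T 1 = 1 satisfies α_i = (r_i/(1−x_i)) / Σ_j (r_j/(1−x_j)) for all i. -/

import Mathlib

open Matrix
open Polynomial Module

lemma aux_charpoly_transpose {n : ℕ} (A : Matrix (Fin n) (Fin n) ℝ) : Aᵀ.charpoly = A.charpoly := by
  unfold Matrix.charpoly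
  rw [← Matrix.det_transpose]
  congr 1
  ext i j
  by_cases h : i = j <;> simp [charmatrix_apply, Matrix.one_apply, h, eq_comm]

lemma aux_charpoly_shift {n : ℕ} (A : Matrix (Fin n) (Fin n) ℝ) :
    (A - 1).charpoly = A.charpoly.comp (X + C 1) := by
  unfold Matrix.charpoly
  have h := RingHom.map_det (eval₂RingHom (C : ℝ →+* ℝ[X]) (X + C 1)) (charmatrix A)
  have hc : A.charmatrix.map ⇑(eval₂RingHom (C : ℝ →+* ℝ[X]) (X + C 1)) = (A - 1).charmatrix := by
    ext i j
    by_cases hij : i = j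
    · subst hij
      simp [charmatrix_apply, Matrix.one_apply]
      ring
    · simp [charmatrix_apply, Matrix.one_apply, hij]
  have h2 : A.charmatrix.det.comp (X + C 1)
      = (eval₂RingHom (C : ℝ →+* ℝ[X]) (X + C 1)) A.charmatrix.det := rfl
  rw [h2, h, RingHom.mapMatrix_apply, hc]

lemma aux_kernel {n : ℕ} (A : Matrix (Fin n) (Fin n) ℝ)
    (h : A.charpoly.rootMultiplicity 1 = 1)
    (r : Fin n → ℝ) (hr : r ᵥ* A = r) (hr0 : r ≠ 0)
    (β : Fin n → ℝ) (hβ : β ᵥ* A = β) : ∃ c : ℝ, β = c • r := by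
  set φ : (Fin n → ℝ) →ₗ[ℝ] (Fin n → ℝ) := Matrix.toLin' (Aᵀ - 1) with hφ
  have hker : ∀ v : Fin n → ℝ, v ᵥ* A = v → φ v = 0 := by
    intro v hv
    simp only [hφ, Matrix.toLin'_apply, Matrix.sub_mulVec, Matrix.one_mulVec,
      Matrix.mulVec_transpose, hv, sub_self]
  have hch : φ.charpoly = (Aᵀ - 1).charpoly := by
    rw [← LinearMap.charpoly_toMatrix φ (Pi.basisFun ℝ (Fin n)),
      LinearMap.toMatrix_eq_toMatrix', hφ, LinearMap.toMatrix'_toLin']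
  have hdeg : φ.charpoly.natTrailingDegree = 1 := by
    rw [hch, aux_charpoly_shift, ← Polynomial.rootMultiplicity_eq_natTrailingDegree,
      aux_charpoly_transpose, h]
  have hmax : finrank ℝ (Module.End.maxGenEigenspace φ 0) = 1 := by
    rw [LinearMap.finrank_maxGenEigenspace_zero_eq, hdeg]
  have hle : LinearMap.ker φ ≤ Module.End.maxGenEigenspace φ 0 := by
    intro v hv
    rw [Module.End.mem_maxGenEigenspace]
    exact ⟨1, by simpa using hv⟩
  have hsub : (ℝ ∙ r) ≤ LinearMap.ker φ := by
    rw [Submodule.span_singleton_le_iff_mem]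
    exact hker r hr
  have hkfin : finrank ℝ (LinearMap.ker φ) ≤ 1 := hmax ▸ Submodule.finrank_mono hle
  have hspan : (ℝ ∙ r) = LinearMap.ker φ := by
    apply Submodule.eq_of_le_of_finrank_le hsub
    rwa [finrank_span_singleton hr0]
  have : β ∈ (ℝ ∙ r) := hspan ▸ hker β hβ
  obtain ⟨c, hc⟩ := Submodule.mem_span_singleton.mp this
  exact ⟨c, hc.symm⟩


/-- Explicit formula for the normalized left eigenvector of
W(x) = diag(x) + (I − diag(x))R at a nonvertex point of the simplex. -/
theorem stmt7 {n : ℕ} (R : Matrix (Fin n) (Fin n) ℝ) (r x α : Fin n → ℝ)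
    (hrow : R *ᵥ (fun _ => 1) = fun _ => 1)
    (hdiag : ∀ i, R i i = 0)
    (hsimple : R.charpoly.rootMultiplicity 1 = 1)
    (hr : r ᵥ* R = r) (hrpos : ∀ i, 0 < r i) (hrnorm : ∑ i, r i = 1)
    (hx0 : ∀ i, 0 ≤ x i) (hx1 : ∑ i, x i = 1)
    (hxv : ∀ i : Fin n, x ≠ Pi.single i 1)
    (hαeig : α ᵥ* (Matrix.diagonal x + (1 - Matrix.diagonal x) * R) = α)
    (hαnorm : ∑ i, α i = 1) :
    ∀ i, α i = (r i / (1 - x i)) / ∑ j, r j / (1 - x j) := by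
  -- each x i < 1
  have hxlt : ∀ i, x i < 1 := by
    intro i
    rcases lt_or_ge (x i) 1 with h | h
    · exact h
    · exfalso
      have hle : x i ≤ 1 := hx1 ▸ Finset.single_le_sum (fun j _ => hx0 j) (Finset.mem_univ i)
      have hxi : x i = 1 := le_antisymm hle h
      have hrest : ∑ j ∈ Finset.univ.erase i, x j = 0 := by
        have := Finset.add_sum_erase Finset.univ x (Finset.mem_univ i)
        rw [hx1, hxi] at this
        linarith
      apply hxv i
      funext j
      by_cases hj : j = i
      · subst hj; simp [Pi.single_apply, hxi]
      · have : x j = 0 := by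
          have h0 := (Finset.sum_eq_zero_iff_of_nonneg (fun k _ => hx0 k)).mp hrest j
            (Finset.mem_erase.mpr ⟨hj, Finset.mem_univ j⟩)
          exact h0
        simp [Pi.single_apply, hj, this]
  intro i
  -- β is a left fixed vector of R
  set β : Fin n → ℝ := fun i => α i * (1 - x i) with hβdef
  have hβ : β ᵥ* R = β := by
    have h1 : α ᵥ* (Matrix.diagonal x + (1 - Matrix.diagonal x) * R)
        = (fun j => α j * x j) + (α ᵥ* (1 - Matrix.diagonal x)) ᵥ* R := by
      rw [Matrix.vecMul_add, ← Matrix.vecMul_vecMul]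
      congr 1
      funext j
      simp [Matrix.vecMul_diagonal]
    have h2 : α ᵥ* (1 - Matrix.diagonal x) = β := by
      rw [Matrix.vecMul_sub, Matrix.vecMul_one]
      funext j
      simp [Matrix.vecMul_diagonal, hβdef]
      ring
    rw [h1, h2] at hαeig
    funext j
    have := congrFun hαeig j
    simp only [Pi.add_apply] at this
    simp [hβdef]
    linarith
  have hr0 : r ≠ 0 := fun h => (hrpos i).ne' (by rw [h]; rfl)
  obtain ⟨c, hc⟩ := aux_kernel R hsimple r hr hr0 β hβ
  -- positivity of the denominator
  have hS : 0 < ∑ j, r j / (1 - x j) :=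
    Finset.sum_pos (fun j _ => div_pos (hrpos j) (by linarith [hxlt j])) ⟨i, Finset.mem_univ i⟩
  -- α in terms of c
  have hα : ∀ j, α j = c * (r j / (1 - x j)) := by
    intro j
    have h1 : α j * (1 - x j) = c * r j := by
      have := congrFun hc j
      simpa [hβdef] using this
    have h2 : (1 - x j) ≠ 0 := by linarith [hxlt j]
    field_simp
    linarith [h1]
  have hcS : c * ∑ j, r j / (1 - x j) = 1 := by
    have : ∑ j, α j = ∑ j, c * (r j / (1 - x j)) := Finset.sum_congr rfl fun j _ => hα j
    rw [hαnorm] at this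
    rw [Finset.mul_sum]
    exact this.symm
  have hcval : c = 1 / ∑ j, r j / (1 - x j) := by
    field_simp
    linarith [hcS]
  rw [hα i, hcval]
  field_simp
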